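/- Under the group G = (ℤ/2)⁵ ⋊ D₅ acting on ℂ⁵ (the k-th ℤ/2 factor acting by x_k ↦ −x_k and D₅ permuting coordinates dihedrally), the subspaces U₁ = span{x_j x_{j+1} : j ∈ ℤ/5} and U₂ = span{x_j x_{j+2} : j ∈ ℤ/5} of Sym²(ℂ⁵) are G-invariant and irreducible, and they are not isomorphic as G-representations. -/

import Mathlib

/-- The dihedral group `D₅` inside `Perm (Fin 5)`, generated by the rotation
and the reflection `(x₀ x₃)(x₁ x₂)`. -/
def D5 : Subgroup (Equiv.Perm (Fin 5)) :=
  Subgroup.closure {finRotate 5, Equiv.swap 0 3 * Equiv.swap 1 2}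

/-- The sign-change data of `(ℤ/2)⁵`: vectors of `±1`s. -/
def SignsC : Set (Fin 5 → ℂ) := {ε | ∀ k, ε k = 1 ∨ ε k = -1}

/-- The action of `(ε, π) ∈ (ℤ/2)⁵ ⋊ D₅` on functions on `ℂ⁵` by substitution. -/
def actG (ε : Fin 5 → ℂ) (π : Equiv.Perm (Fin 5)) (f : (Fin 5 → ℂ) → ℂ) :
    (Fin 5 → ℂ) → ℂ :=
  fun x => f (fun k => ε k * x (π k))

/-- `U₁ = span{x_j x_{j+1}}`. -/
noncomputable def U1 : Submodule ℂ ((Fin 5 → ℂ) → ℂ) :=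
  Submodule.span ℂ {f | ∃ j : Fin 5, f = fun x => x j * x (j + 1)}

/-- `U₂ = span{x_j x_{j+2}}`. -/
noncomputable def U2 : Submodule ℂ ((Fin 5 → ℂ) → ℂ) :=
  Submodule.span ℂ {f | ∃ j : Fin 5, f = fun x => x j * x (j + 2)}

namespace Stmt17Aux

abbrev V : Type := (Fin 5 → ℂ) → ℂ
def m (d j : Fin 5) : V := fun x => x j * x (j + d)
noncomputable def Ud (d : Fin 5) : Submodule ℂ V := Submodule.span ℂ {f | ∃ j, f = m d j}

def A (ε : Fin 5 → ℂ) (π : Equiv.Perm (Fin 5)) : V →ₗ[ℂ] V where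
  toFun := actG ε π
  map_add' _ _ := rfl
  map_smul' _ _ := rfl

@[simp] lemma A_apply (ε π f) : A ε π f = actG ε π f := rfl

def adjP (d : Fin 5) (π : Equiv.Perm (Fin 5)) : Prop :=
  ∀ j : Fin 5, ∃ j' : Fin 5, (π j = j' ∧ π (j+d) = j'+d) ∨ (π j = j'+d ∧ π (j+d) = j')

lemma actG_mem_Ud {d π} (h : adjP d π) (ε : Fin 5 → ℂ) (j : Fin 5) :
    actG ε π (m d j) ∈ Ud d := by
  obtain ⟨j', hc⟩ := h j
  have he : actG ε π (m d j) = (ε j * ε (j + d)) • m d j' := by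
    funext x
    rcases hc with ⟨h1, h2⟩ | ⟨h1, h2⟩ <;>
      simp only [actG, m, Pi.smul_apply, smul_eq_mul, h1, h2] <;> ring
  rw [he]
  exact Submodule.smul_mem _ _ (Submodule.subset_span ⟨j', rfl⟩)

lemma act_Ud {d π} (h : adjP d π) (ε : Fin 5 → ℂ) {f} (hf : f ∈ Ud d) :
    actG ε π f ∈ Ud d := by
  have hle : Ud d ≤ (Ud d).comap (A ε π) := by
    rw [Ud, Submodule.span_le]
    rintro g ⟨j, rfl⟩
    exact actG_mem_Ud h ε j
  exact hle hf

def vv (d j : Fin 5) : Fin 5 → ℂ := fun k => if k = j ∨ k = j + d then 1 else 0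

lemma m_vv {d} (hd : d = 1 ∨ d = 2) (i j : Fin 5) :
    m d i (vv d j) = if i = j then 1 else 0 := by
  have key : ∀ i j : Fin 5, i ≠ j →
      (¬(i = j ∨ i = j + d) ∨ ¬(i + d = j ∨ i + d = j + d)) := by
    rcases hd with rfl | rfl <;> decide
  have key2 : ∀ i j : Fin 5, ¬(i + d = j ∧ i = j + d) := by
    rcases hd with rfl | rfl <;> decide
  rcases eq_or_ne i j with rfl | h
  · simp [m, vv]
  · rcases key i j h with hk | hk <;> simp [m, vv, hk, h] <;>
      exact fun h1 h2 => key2 i j ⟨h1, h2⟩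

noncomputable def Phi (d : Fin 5) : V →ₗ[ℂ] V :=
  ∑ j : Fin 5, (LinearMap.proj (vv d j)).smulRight (m d j)

lemma repr_eq {d} (hd : d = 1 ∨ d = 2) {f} (hf : f ∈ Ud d) :
    f = ∑ j : Fin 5, f (vv d j) • m d j := by
  have hker : Ud d ≤ LinearMap.ker (LinearMap.id - Phi d) := by
    rw [Ud, Submodule.span_le]
    rintro g ⟨i, rfl⟩
    simp only [SetLike.mem_coe, LinearMap.mem_ker, LinearMap.sub_apply,
      LinearMap.id_apply, sub_eq_zero]
    simp [Phi, LinearMap.sum_apply, m_vv hd, ite_smul]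
  have h := hker hf
  simp only [LinearMap.mem_ker, LinearMap.sub_apply, LinearMap.id_apply, sub_eq_zero] at h
  nth_rewrite 1 [h]
  simp [Phi]

lemma exists_coeff_ne {d} (hd : d = 1 ∨ d = 2) {f} (hf : f ∈ Ud d) (h0 : f ≠ 0) :
    ∃ j, f (vv d j) ≠ 0 := by
  by_contra h
  push_neg at h
  exact h0 (by rw [repr_eq hd hf]; simp [h])

def sg (b : Fin 5 → Bool) : Fin 5 → ℂ := fun k => if b k then -1 else 1

lemma sg_mem (b : Fin 5 → Bool) : sg b ∈ SignsC := by
  intro k; by_cases h : b k <;> simp [sg, h]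

lemma sg_mul (b : Fin 5 → Bool) (x y : Fin 5) :
    sg b x * sg b y = if b x = b y then 1 else -1 := by
  cases hx : b x <;> cases hy : b y <;> simp [sg, hx, hy]

lemma actG_one_m (ε : Fin 5 → ℂ) (d i : Fin 5) :
    actG ε 1 (m d i) = (ε i * ε (i + d)) • m d i := by
  funext x
  simp only [actG, m, Equiv.Perm.coe_one, id_eq, Pi.smul_apply, smul_eq_mul]
  ring

@[simp] lemma actG_add (ε π) (f g : V) : actG ε π (f + g) = actG ε π f + actG ε π g := rfl
@[simp] lemma actG_smul (ε π) (c : ℂ) (f : V) : actG ε π (c • f) = c • actG ε π f := rfl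

lemma avg {d} (hd : d = 1 ∨ d = 2) (j : Fin 5) (b1 b2 : Fin 5 → Bool)
    (h1 : b1 j = b1 (j + d)) (h2 : b2 j = b2 (j + d))
    (hne : ∀ i, i ≠ j → (b1 i ≠ b1 (i + d) ∨ b2 i ≠ b2 (i + d)))
    {f} (hf : f ∈ Ud d) :
    (f + actG (sg b1) 1 f) + actG (sg b2) 1 (f + actG (sg b1) 1 f)
      = (4 * f (vv d j)) • m d j := by
  set L : V →ₗ[ℂ] V :=
    (LinearMap.id + A (sg b2) 1) ∘ₗ (LinearMap.id + A (sg b1) 1) with hL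
  set R : V →ₗ[ℂ] V :=
    (4 : ℂ) • (LinearMap.proj (vv d j) : V →ₗ[ℂ] ℂ).smulRight (m d j) with hR
  have hker : Ud d ≤ LinearMap.ker (L - R) := by
    rw [Ud, Submodule.span_le]
    rintro g ⟨i, rfl⟩
    simp only [SetLike.mem_coe, LinearMap.mem_ker, LinearMap.sub_apply, sub_eq_zero,
      hL, hR, LinearMap.comp_apply, LinearMap.add_apply, LinearMap.id_apply,
      LinearMap.smul_apply, LinearMap.smulRight_apply, LinearMap.proj_apply, A_apply]
    rw [actG_one_m (sg b1), actG_add, actG_smul, actG_one_m (sg b2),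
      sg_mul, sg_mul, m_vv hd, smul_smul]
    rcases eq_or_ne i j with rfl | h
    · rw [if_pos h1, if_pos h2, if_pos rfl]
      module
    · rw [if_neg h]
      rcases hne i h with hb | hb
      · rw [if_neg hb]; module
      · rw [if_neg hb]; module
  have h := hker hf
  simp only [LinearMap.mem_ker, LinearMap.sub_apply, sub_eq_zero, hL, hR,
    LinearMap.comp_apply, LinearMap.add_apply, LinearMap.id_apply,
    LinearMap.smul_apply, LinearMap.smulRight_apply, LinearMap.proj_apply, A_apply] at h
  rw [h, smul_smul]

lemma coeff_act {d} (hd : d = 1 ∨ d = 2) (b : Fin 5 → Bool) (j : Fin 5) {g} (hg : g ∈ Ud d) :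
    actG (sg b) 1 g (vv d j) = (if b j = b (j + d) then 1 else -1) * g (vv d j) := by
  set c : ℂ := if b j = b (j + d) then 1 else -1 with hc
  set L : V →ₗ[ℂ] ℂ :=
    (LinearMap.proj (vv d j) : V →ₗ[ℂ] ℂ) ∘ₗ A (sg b) 1 - c • LinearMap.proj (vv d j) with hL
  have hker : Ud d ≤ LinearMap.ker L := by
    rw [Ud, Submodule.span_le]
    rintro g ⟨i, rfl⟩
    simp only [SetLike.mem_coe, LinearMap.mem_ker, hL, LinearMap.sub_apply,
      LinearMap.comp_apply, LinearMap.smul_apply, LinearMap.proj_apply, A_apply,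
      sub_eq_zero, smul_eq_mul]
    rw [actG_one_m, sg_mul]
    rcases eq_or_ne i j with rfl | h
    · rfl
    · simp [m_vv hd, if_neg h]
  have h := hker hg
  simp only [LinearMap.mem_ker, hL, LinearMap.sub_apply, LinearMap.comp_apply,
    LinearMap.smul_apply, LinearMap.proj_apply, A_apply, sub_eq_zero, smul_eq_mul] at h
  exact h

lemma one_sign : (fun _ => (1:ℂ)) ∈ SignsC := fun _ => Or.inl rfl

lemma rot_mem_D5 : finRotate 5 ∈ D5 :=
  Subgroup.subset_closure (Set.mem_insert _ _)

lemma irred {d} (hd : d = 1 ∨ d = 2)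
    (W : Submodule ℂ V) (hle : W ≤ Ud d)
    (hinv : ∀ ε ∈ SignsC, ∀ π ∈ D5, ∀ f ∈ W, actG ε π f ∈ W) :
    W = ⊥ ∨ W = Ud d := by
  rcases eq_or_ne W ⊥ with h | h
  · exact Or.inl h
  right
  obtain ⟨f, hfW, hf0⟩ := (Submodule.ne_bot_iff W).mp h
  obtain ⟨j, hj⟩ := exists_coeff_ne hd (hle hfW) hf0
  have hbs : ∃ b1 b2 : Fin 5 → Bool, b1 j = b1 (j+d) ∧ b2 j = b2 (j+d) ∧
      ∀ i, i ≠ j → (b1 i ≠ b1 (i+d) ∨ b2 i ≠ b2 (i+d)) := by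
    rcases hd with rfl | rfl
    · exact ⟨fun k => decide (k = j+2), fun k => decide (k = j+4),
        (by decide : ∀ j : Fin 5, decide (j = j+2) = decide (j+1 = j+2)) j,
        (by decide : ∀ j : Fin 5, decide (j = j+4) = decide (j+1 = j+4)) j,
        fun i hi => (by decide : ∀ j i : Fin 5, i ≠ j →
          (decide (i = j+2) ≠ decide (i+1 = j+2) ∨
           decide (i = j+4) ≠ decide (i+1 = j+4))) j i hi⟩
    · exact ⟨fun k => decide (k = j+1), fun k => decide (k = j ∨ k = j+2),
        (by decide : ∀ j : Fin 5, decide (j = j+1) = decide (j+2 = j+1)) j,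
        (by decide : ∀ j : Fin 5,
          decide (j = j ∨ j = j+2) = decide (j+2 = j ∨ j+2 = j+2)) j,
        fun i hi => (by decide : ∀ j i : Fin 5, i ≠ j →
          (decide (i = j+1) ≠ decide (i+2 = j+1) ∨
           decide (i = j ∨ i = j+2) ≠ decide (i+2 = j ∨ i+2 = j+2))) j i hi⟩
  obtain ⟨b1, b2, hb1, hb2, hbne⟩ := hbs
  have hg1 : actG (sg b1) 1 f ∈ W := hinv _ (sg_mem b1) 1 (one_mem D5) f hfW
  have hf2 : f + actG (sg b1) 1 f ∈ W := W.add_mem hfW hg1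
  have hg2 : actG (sg b2) 1 (f + actG (sg b1) 1 f) ∈ W :=
    hinv _ (sg_mem b2) 1 (one_mem D5) _ hf2
  have hh : (f + actG (sg b1) 1 f) + actG (sg b2) 1 (f + actG (sg b1) 1 f) ∈ W :=
    W.add_mem hf2 hg2
  rw [avg hd j b1 b2 hb1 hb2 hbne (hle hfW)] at hh
  have h4 : (4 * f (vv d j)) ≠ 0 := mul_ne_zero (by norm_num) hj
  have hmj : m d j ∈ W := by
    have := W.smul_mem (4 * f (vv d j))⁻¹ hh
    rwa [inv_smul_smul₀ h4] at this
  have hrot : ∀ i, m d i ∈ W → m d (i+1) ∈ W := by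
    intro i hi
    have he : actG (fun _ => 1) (finRotate 5) (m d i) = m d (i+1) := by
      funext x
      simp only [actG, m, finRotate_succ_apply, one_mul]
      rw [add_right_comm]
    have := hinv _ one_sign (finRotate 5) rot_mem_D5 _ hi
    rwa [he] at this
  have hall : ∀ i, m d i ∈ W := by
    intro i
    rcases (by decide : ∀ i j : Fin 5,
        i = j ∨ i = j+1 ∨ i = j+1+1 ∨ i = j+1+1+1 ∨ i = j+1+1+1+1) i j with
      rfl | rfl | rfl | rfl | rfl
    · exact hmj
    · exact hrot _ hmj
    · exact hrot _ (hrot _ hmj)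
    · exact hrot _ (hrot _ (hrot _ hmj))
    · exact hrot _ (hrot _ (hrot _ (hrot _ hmj)))
  refine le_antisymm hle ?_
  rw [Ud, Submodule.span_le]
  rintro g ⟨i, rfl⟩
  exact hall i

lemma dep3 (a1 a2 a3 b1 b2 b3 : ℂ) :
    ∃ x y z : ℂ, (x ≠ 0 ∨ y ≠ 0 ∨ z ≠ 0) ∧
      x*a1 + y*a2 + z*a3 = 0 ∧ x*b1 + y*b2 + z*b3 = 0 := by
  by_cases hD : a1*b2 - a2*b1 = 0
  · by_cases ha : a1 = 0
    · by_cases hb : b1 = 0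
      · exact ⟨1, 0, 0, Or.inl one_ne_zero, by rw [ha]; ring, by rw [hb]; ring⟩
      · refine ⟨b2/b1, -1, 0, Or.inr (Or.inl (by norm_num)), ?_, ?_⟩
        · field_simp
          linear_combination hD
        · field_simp
          ring
    · refine ⟨a2/a1, -1, 0, Or.inr (Or.inl (by norm_num)), ?_, ?_⟩
      · field_simp
        ring
      · field_simp
        linear_combination -hD
  · refine ⟨(a3*b2 - a2*b3)/(a1*b2 - a2*b1), (a1*b3 - a3*b1)/(a1*b2 - a2*b1), -1,
      Or.inr (Or.inr (by norm_num)), ?_, ?_⟩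
    · field_simp
      have hD' : b2 * a1 - a2 * b1 ≠ 0 := by intro h; apply hD; linear_combination h
      linear_combination a3 * mul_inv_cancel₀ hD'
    · field_simp
      have hD' : b2 * a1 - a2 * b1 ≠ 0 := by intro h; apply hD; linear_combination h
      linear_combination b3 * mul_inv_cancel₀ hD'

lemma noniso :
    ¬ ∃ T : V →ₗ[ℂ] V,
        Submodule.map T (Ud 1) = Ud 2 ∧
        (∀ f ∈ Ud 1, ∀ g ∈ Ud 1, T f = T g → f = g) ∧
        (∀ ε ∈ SignsC, ∀ π ∈ D5, ∀ f ∈ Ud 1, T (actG ε π f) = actG ε π (T f)) := by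
  rintro ⟨T, hmap, hinj, heqv⟩
  set bs : Fin 5 → Bool := fun k => decide (k = 0 ∨ k = 2) with hbs
  have hmemU1 : ∀ i : Fin 5, m 1 i ∈ Ud 1 := fun i => Submodule.subset_span ⟨i, rfl⟩
  have hT : ∀ i : Fin 5, T (m 1 i) ∈ Ud 2 := fun i =>
    hmap ▸ Submodule.mem_map_of_mem (hmemU1 i)
  have hneg : ∀ i : Fin 5, (i = 0 ∨ i = 1 ∨ i = 2) →
      actG (sg bs) 1 (T (m 1 i)) = -(T (m 1 i)) := by
    intro i hi
    have hb : bs i ≠ bs (i + 1) := by rcases hi with rfl | rfl | rfl <;> decide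
    have h1 : actG (sg bs) 1 (m 1 i) = -(m 1 i) := by
      rw [actG_one_m, sg_mul, if_neg hb, neg_one_smul]
    calc actG (sg bs) 1 (T (m 1 i)) = T (actG (sg bs) 1 (m 1 i)) :=
          (heqv _ (sg_mem bs) 1 (one_mem D5) _ (hmemU1 i)).symm
      _ = T (-(m 1 i)) := by rw [h1]
      _ = -(T (m 1 i)) := map_neg T _
  have hvan : ∀ i : Fin 5, (i = 0 ∨ i = 1 ∨ i = 2) → ∀ jj : Fin 5,
      (jj = 0 ∨ jj = 1 ∨ jj = 4) → T (m 1 i) (vv 2 jj) = 0 := by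
    intro i hi jj hjj
    have hchi : bs jj = bs (jj + 2) := by rcases hjj with rfl | rfl | rfl <;> decide
    have hc := coeff_act (Or.inr rfl) bs jj (hT i)
    rw [hneg i hi, if_pos hchi, one_mul] at hc
    have hc' : -(T (m 1 i) (vv 2 jj)) = T (m 1 i) (vv 2 jj) := hc
    have h2 : (2:ℂ) * T (m 1 i) (vv 2 jj) = 0 := by linear_combination -hc'
    exact (mul_eq_zero.mp h2).resolve_left two_ne_zero
  obtain ⟨x, y, z, hxyz, he1, he2⟩ := dep3 (T (m 1 0) (vv 2 2)) (T (m 1 1) (vv 2 2))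
    (T (m 1 2) (vv 2 2)) (T (m 1 0) (vv 2 3)) (T (m 1 1) (vv 2 3)) (T (m 1 2) (vv 2 3))
  set g : V := x • T (m 1 0) + y • T (m 1 1) + z • T (m 1 2) with hg
  have hgU2 : g ∈ Ud 2 := Submodule.add_mem _ (Submodule.add_mem _
    (Submodule.smul_mem _ _ (hT 0)) (Submodule.smul_mem _ _ (hT 1)))
    (Submodule.smul_mem _ _ (hT 2))
  have hgc : ∀ jj : Fin 5, g (vv 2 jj) = 0 := by
    intro jj
    have hex : g (vv 2 jj) = x * T (m 1 0) (vv 2 jj) + y * T (m 1 1) (vv 2 jj)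
        + z * T (m 1 2) (vv 2 jj) := rfl
    rcases (by decide : ∀ jj : Fin 5, jj = 0 ∨ jj = 1 ∨ jj = 2 ∨ jj = 3 ∨ jj = 4) jj with
      rfl | rfl | rfl | rfl | rfl
    · rw [hex, hvan 0 (Or.inl rfl) 0 (Or.inl rfl),
        hvan 1 (Or.inr (Or.inl rfl)) 0 (Or.inl rfl),
        hvan 2 (Or.inr (Or.inr rfl)) 0 (Or.inl rfl)]; ring
    · rw [hex, hvan 0 (Or.inl rfl) 1 (Or.inr (Or.inl rfl)),
        hvan 1 (Or.inr (Or.inl rfl)) 1 (Or.inr (Or.inl rfl)),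
        hvan 2 (Or.inr (Or.inr rfl)) 1 (Or.inr (Or.inl rfl))]; ring
    · rw [hex]; exact he1
    · rw [hex]; exact he2
    · rw [hex, hvan 0 (Or.inl rfl) 4 (Or.inr (Or.inr rfl)),
        hvan 1 (Or.inr (Or.inl rfl)) 4 (Or.inr (Or.inr rfl)),
        hvan 2 (Or.inr (Or.inr rfl)) 4 (Or.inr (Or.inr rfl))]; ring
  have hg0 : g = 0 := by
    rw [repr_eq (Or.inr rfl) hgU2]
    simp [hgc]
  have hTc : T (x • m 1 0 + y • m 1 1 + z • m 1 2) = T 0 := by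
    rw [map_zero, map_add, map_add, map_smul, map_smul, map_smul, ← hg]
    exact hg0
  have hcU1 : x • m 1 0 + y • m 1 1 + z • m 1 2 ∈ Ud 1 :=
    Submodule.add_mem _ (Submodule.add_mem _ (Submodule.smul_mem _ _ (hmemU1 0))
      (Submodule.smul_mem _ _ (hmemU1 1))) (Submodule.smul_mem _ _ (hmemU1 2))
  have h0 := hinj _ hcU1 0 (Submodule.zero_mem _) hTc
  have hx : x = 0 := by
    have h := congrFun h0 (vv 1 0)
    simpa [m_vv (Or.inl rfl)] using h
  have hy : y = 0 := by
    have h := congrFun h0 (vv 1 1)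
    simpa [m_vv (Or.inl rfl)] using h
  have hz : z = 0 := by
    have h := congrFun h0 (vv 1 2)
    simpa [m_vv (Or.inl rfl)] using h
  rcases hxyz with h | h | h <;> [exact h hx; exact h hy; exact h hz]

lemma adjP_one (d : Fin 5) : adjP d 1 := fun j => ⟨j, Or.inl ⟨rfl, rfl⟩⟩

lemma adjP_mul {d π σ} (hπ : adjP d π) (hσ : adjP d σ) : adjP d (π * σ) := by
  intro j
  obtain ⟨j', h1⟩ := hσ j
  rcases h1 with ⟨e1, e2⟩ | ⟨e1, e2⟩
  · obtain ⟨j'', h2⟩ := hπ j'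
    exact ⟨j'', by rcases h2 with ⟨g1, g2⟩ | ⟨g1, g2⟩ <;>
      simp [Equiv.Perm.mul_apply, e1, e2, g1, g2]⟩
  · obtain ⟨j'', h2⟩ := hπ j'
    rcases h2 with ⟨g1, g2⟩ | ⟨g1, g2⟩
    · exact ⟨j'', Or.inr ⟨by simp [Equiv.Perm.mul_apply, e1, g2],
        by simp [Equiv.Perm.mul_apply, e2, g1]⟩⟩
    · exact ⟨j'', Or.inl ⟨by simp [Equiv.Perm.mul_apply, e1, g2],
        by simp [Equiv.Perm.mul_apply, e2, g1]⟩⟩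

lemma adjP_of_D5 {d : Fin 5}
    (h1 : adjP d (finRotate 5)) (h2 : adjP d (Equiv.swap 0 3 * Equiv.swap 1 2))
    (h3 : adjP d (finRotate 5)⁻¹) (h4 : adjP d (Equiv.swap 0 3 * Equiv.swap 1 2)⁻¹)
    {π} (hπ : π ∈ D5) : adjP d π := by
  have hm : π ∈ Submonoid.closure
      (({finRotate 5, Equiv.swap 0 3 * Equiv.swap 1 2} : Set (Equiv.Perm (Fin 5))) ∪
        ({finRotate 5, Equiv.swap 0 3 * Equiv.swap 1 2} : Set (Equiv.Perm (Fin 5)))⁻¹) := by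
    rw [← Subgroup.closure_toSubmonoid]; exact hπ
  clear hπ
  induction hm using Submonoid.closure_induction with
  | mem x hx =>
    rcases hx with hx | hx
    · rcases hx with rfl | hx
      · exact h1
      · rw [Set.mem_singleton_iff] at hx; subst hx; exact h2
    · rw [Set.mem_inv] at hx
      rcases hx with hx | hx
      · have : x = (finRotate 5)⁻¹ := by rw [← hx, inv_inv]
        subst this; exact h3
      · rw [Set.mem_singleton_iff] at hx
        have : x = (Equiv.swap 0 3 * Equiv.swap 1 2)⁻¹ := by rw [← hx, inv_inv]
        subst this; exact h4
  | one => exact adjP_one d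
  | mul a b _ _ ha hb => exact adjP_mul ha hb

lemma adj_r1 : adjP 1 (finRotate 5) := by unfold adjP; decide
lemma adj_ri1 : adjP 1 (finRotate 5)⁻¹ := by unfold adjP; decide
lemma adj_s1 : adjP 1 (Equiv.swap 0 3 * Equiv.swap 1 2) := by unfold adjP; decide
lemma adj_si1 : adjP 1 (Equiv.swap 0 3 * Equiv.swap 1 2)⁻¹ := by unfold adjP; decide
lemma adj_r2 : adjP 2 (finRotate 5) := by unfold adjP; decide
lemma adj_ri2 : adjP 2 (finRotate 5)⁻¹ := by unfold adjP; decide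
lemma adj_s2 : adjP 2 (Equiv.swap 0 3 * Equiv.swap 1 2) := by unfold adjP; decide
lemma adj_si2 : adjP 2 (Equiv.swap 0 3 * Equiv.swap 1 2)⁻¹ := by unfold adjP; decide

lemma adjP_D5_1 {π} (hπ : π ∈ D5) : adjP 1 π :=
  adjP_of_D5 adj_r1 adj_s1 adj_ri1 adj_si1 hπ
lemma adjP_D5_2 {π} (hπ : π ∈ D5) : adjP 2 π :=
  adjP_of_D5 adj_r2 adj_s2 adj_ri2 adj_si2 hπ

end Stmt17Aux

/-- Under `G = (ℤ/2)⁵ ⋊ D₅` acting on `ℂ⁵` by sign changes and dihedral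
coordinate permutations, the subspaces `U₁ = span{x_j x_{j+1}}` and
`U₂ = span{x_j x_{j+2}}` of `Sym²(ℂ⁵)` are `G`-invariant and irreducible and
are not isomorphic as `G`-representations. -/
theorem stmt_17 :
    -- invariance
    (∀ ε ∈ SignsC, ∀ π ∈ D5, ∀ f ∈ U1, actG ε π f ∈ U1) ∧
    (∀ ε ∈ SignsC, ∀ π ∈ D5, ∀ f ∈ U2, actG ε π f ∈ U2) ∧
    -- irreducibility
    (∀ W : Submodule ℂ ((Fin 5 → ℂ) → ℂ), W ≤ U1 →
      (∀ ε ∈ SignsC, ∀ π ∈ D5, ∀ f ∈ W, actG ε π f ∈ W) → W = ⊥ ∨ W = U1) ∧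
    (∀ W : Submodule ℂ ((Fin 5 → ℂ) → ℂ), W ≤ U2 →
      (∀ ε ∈ SignsC, ∀ π ∈ D5, ∀ f ∈ W, actG ε π f ∈ W) → W = ⊥ ∨ W = U2) ∧
    -- non-isomorphism: no equivariant linear isomorphism U₁ → U₂
    ¬ ∃ T : ((Fin 5 → ℂ) → ℂ) →ₗ[ℂ] ((Fin 5 → ℂ) → ℂ),
        Submodule.map T U1 = U2 ∧
        (∀ f ∈ U1, ∀ g ∈ U1, T f = T g → f = g) ∧
        (∀ ε ∈ SignsC, ∀ π ∈ D5, ∀ f ∈ U1, T (actG ε π f) = actG ε π (T f)) := by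
  refine ⟨?_, ?_, ?_, ?_, ?_⟩
  · intro ε _ π hπ f hf
    exact Stmt17Aux.act_Ud (Stmt17Aux.adjP_D5_1 hπ) ε hf
  · intro ε _ π hπ f hf
    exact Stmt17Aux.act_Ud (Stmt17Aux.adjP_D5_2 hπ) ε hf
  · intro W hle hinv
    exact Stmt17Aux.irred (Or.inl rfl) W hle hinv
  · intro W hle hinv
    exact Stmt17Aux.irred (Or.inr rfl) W hle hinv
  · exact Stmt17Aux.noniso
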